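/- Let z be a complex number with |z| = 1 such that there exist integers a, b, c, d with 2z = a + b·i + c·√2 + d·i·√2. Then z⁸ = 1, i.e. z = e^{i·k·π/4} for some integer k. In other words, the only global phases z with 2z ∈ ℤ[√2, i] are the integer multiples of the phase e^{iπ/4}. -/

import Mathlib

lemma helper8 (z v : ℂ) (hsq : (2*z)^2 = v) (hv : v^4 = 256) : z ^ 8 = 1 := by
  have h8 : (2*z)^8 = 256 := by
    rw [show (2*z)^8 = ((2*z)^2)^4 from by ring, hsq, hv]
  linear_combination h8/256

theorem phase_in_Zsqrt2i_is_eighth_root (z : ℂ)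
    (hz : ‖z‖ = 1)
    (h : ∃ a b c d : ℤ,
      2 * z = (a : ℂ) + (b : ℂ) * Complex.I + (c : ℂ) * (Real.sqrt 2 : ℂ) +
        (d : ℂ) * Complex.I * (Real.sqrt 2 : ℂ)) :
    z ^ 8 = 1 := by
  obtain ⟨a, b, c, d, h⟩ := h
  have ht : ((Real.sqrt 2 : ℝ) : ℂ)^2 = 2 := by
    norm_cast
    exact Real.sq_sqrt (by norm_num)
  have hs2 : Real.sqrt 2 * Real.sqrt 2 = 2 := Real.mul_self_sqrt (by norm_num)
  have hre : 2 * z.re = (a : ℝ) + c * Real.sqrt 2 := by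
    have := congrArg Complex.re h
    simpa using this
  have him : 2 * z.im = (b : ℝ) + d * Real.sqrt 2 := by
    have := congrArg Complex.im h
    simpa using this
  have habs : z.re^2 + z.im^2 = 1 := by
    have h1 : Complex.normSq z = 1 := by
      rw [← Complex.sq_norm, hz]; norm_num
    rw [Complex.normSq_apply] at h1
    nlinarith [h1]
  have key : ((a : ℝ) + c * Real.sqrt 2)^2 + ((b : ℝ) + d * Real.sqrt 2)^2 = 4 := by
    rw [← hre, ← him]; nlinarith [habs]
  have main : ((a^2 + b^2 + 2*c^2 + 2*d^2 : ℤ) : ℝ)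
      + ((2*(a*c + b*d) : ℤ) : ℝ) * Real.sqrt 2 = 4 := by
    push_cast
    linear_combination key - ((c:ℝ)^2 + (d:ℝ)^2) * hs2
  have hn : (2*(a*c + b*d) : ℤ) = 0 := by
    by_contra hne
    have hirr : Irrational (((a^2 + b^2 + 2*c^2 + 2*d^2 : ℤ) : ℝ)
        + ((2*(a*c + b*d) : ℤ) : ℝ) * Real.sqrt 2) :=
      (irrational_sqrt_two.intCast_mul hne).intCast_add _
    rw [main] at hirr
    exact hirr ⟨4, by norm_num⟩
  have h1 : a*c + b*d = 0 := by omega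
  have h2 : a^2 + b^2 + 2*c^2 + 2*d^2 = 4 := by
    rw [hn] at main
    push_cast at main
    norm_num at main
    exact_mod_cast (show ((a^2 + b^2 + 2*c^2 + 2*d^2 : ℤ) : ℝ) = 4 by push_cast at main ⊢; linarith)
  have ha1 : -2 ≤ a := by nlinarith [sq_nonneg b, sq_nonneg c, sq_nonneg d, sq_nonneg (a+2)]
  have ha2 : a ≤ 2 := by nlinarith [sq_nonneg b, sq_nonneg c, sq_nonneg d, sq_nonneg (a-2)]
  have hb1 : -2 ≤ b := by nlinarith [sq_nonneg a, sq_nonneg c, sq_nonneg d, sq_nonneg (b+2)]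
  have hb2 : b ≤ 2 := by nlinarith [sq_nonneg a, sq_nonneg c, sq_nonneg d, sq_nonneg (b-2)]
  have hc1 : -1 ≤ c := by nlinarith [sq_nonneg a, sq_nonneg b, sq_nonneg d, sq_nonneg (c+1)]
  have hc2 : c ≤ 1 := by nlinarith [sq_nonneg a, sq_nonneg b, sq_nonneg d, sq_nonneg (c-1)]
  have hd1 : -1 ≤ d := by nlinarith [sq_nonneg a, sq_nonneg b, sq_nonneg c, sq_nonneg (d+1)]
  have hd2 : d ≤ 1 := by nlinarith [sq_nonneg a, sq_nonneg b, sq_nonneg c, sq_nonneg (d-1)]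
  interval_cases a <;> interval_cases b <;> interval_cases c <;> interval_cases d <;>
    first
      | (exfalso; revert h1 h2; norm_num; done)
      | (push_cast at h
         first
           | (have hsq : (2*z)^2 = 4 := by rw [h]; ring
              exact helper8 z 4 hsq (by norm_num))
           | (have hsq : (2*z)^2 = -4 := by rw [h]; linear_combination 4*Complex.I_sq
              exact helper8 z (-4) hsq (by norm_num))
           | (have hsq : (2*z)^2 = 4*Complex.I := by
                rw [h]; linear_combination (1+Complex.I)^2*ht + 2*Complex.I_sq
              exact helper8 z (4*Complex.I) hsq
                (by linear_combination 256*(Complex.I^2-1)*Complex.I_sq))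
           | (have hsq : (2*z)^2 = -(4*Complex.I) := by
                rw [h]; linear_combination (1-Complex.I)^2*ht + 2*Complex.I_sq
              exact helper8 z (-(4*Complex.I)) hsq
                (by linear_combination 256*(Complex.I^2-1)*Complex.I_sq)))
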